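/- A mass-action system G_k is dynamically equivalent to some complex-balanced mass-action system if and only if it is dynamically equivalent to a complex-balanced mass-action system G'_{k'} whose vertex set is contained in the set of source vertices of G. -/
import Mathlib


open Finset

noncomputable section
open scoped Classical

abbrev Vtx (n : ℕ) := Fin n → ℝ

/-- A reaction network: a finite set of directed edges between points of ℝⁿ. -/
abbrev Net (n : ℕ) := Finset (Vtx n × Vtx n)

variable {n : ℕ}

/-- The vertices of a network. -/
def verts (G : Net n) : Finset (Vtx n) := G.image Prod.fst ∪ G.image Prod.snd

/-- The source vertices of a network. -/
def sources (G : Net n) : Finset (Vtx n) := G.image Prod.fst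

/-- No self-loops. -/
def NoLoops (G : Net n) : Prop := ∀ e ∈ G, e.1 ≠ e.2

/-- `J` is a flux vector on `G`: positive on edges, zero on non-edges. -/
def IsFlux (G : Net n) (J : Vtx n × Vtx n → ℝ) : Prop :=
  (∀ e ∈ G, 0 < J e) ∧ ∀ e, e ∉ G → J e = 0

/-- Total outgoing flux at a vertex. -/
def outSum (G : Net n) (J : Vtx n × Vtx n → ℝ) (v : Vtx n) : ℝ :=
  ∑ e ∈ G.filter (fun e => e.1 = v), J e

/-- Total incoming flux at a vertex. -/
def inSum (G : Net n) (J : Vtx n × Vtx n → ℝ) (v : Vtx n) : ℝ :=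
  ∑ e ∈ G.filter (fun e => e.2 = v), J e

/-- Potential at a vertex: incoming minus outgoing flux (0 off the graph). -/
def potential (G : Net n) (J : Vtx n × Vtx n → ℝ) (v : Vtx n) : ℝ :=
  inSum G J v - outSum G J v

/-- Complex-balanced flux: in-flux equals out-flux at every vertex. -/
def ComplexBalanced (G : Net n) (J : Vtx n × Vtx n → ℝ) : Prop :=
  ∀ v ∈ verts G, inSum G J v = outSum G J v

/-- Detailed-balanced flux: every edge is reversible and paired fluxes agree. -/
def DetailedBalanced (G : Net n) (J : Vtx n × Vtx n → ℝ) : Prop :=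
  ∀ e ∈ G, (e.2, e.1) ∈ G ∧ J e = J (e.2, e.1)

/-- Steady state flux: flux-weighted reaction vectors sum to zero. -/
def SteadyFlux (G : Net n) (J : Vtx n × Vtx n → ℝ) : Prop :=
  ∑ e ∈ G, J e • (e.2 - e.1) = 0

/-- Flux-weighted sum of outgoing reaction vectors at a vertex. -/
def netOut (G : Net n) (J : Vtx n × Vtx n → ℝ) (v : Vtx n) : Vtx n :=
  ∑ e ∈ G.filter (fun e => e.1 = v), J e • (e.2 - e.1)

/-- Flux equivalence of two flux systems. -/
def FluxEquiv (G : Net n) (J : Vtx n × Vtx n → ℝ)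
    (G' : Net n) (J' : Vtx n × Vtx n → ℝ) : Prop :=
  ∀ v ∈ verts G ∪ verts G', netOut G J v = netOut G' J' v

/-- Reachability along directed edges. -/
def Reachable (G : Net n) : Vtx n → Vtx n → Prop :=
  Relation.ReflTransGen (fun a b => (a, b) ∈ G)

/-- Weak reversibility: every edge lies on a directed cycle. -/
def WeaklyReversible (G : Net n) : Prop := ∀ e ∈ G, Reachable G e.2 e.1

/-- Reversibility: every edge has its reverse in the network. -/
def Reversible (G : Net n) : Prop := ∀ e ∈ G, (e.2, e.1) ∈ G

/-- Positive state. -/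
def Pos (x : Vtx n) : Prop := ∀ i, 0 < x i

/-- Monomial `x^y = ∏ xᵢ^{yᵢ}` (real exponents). -/
def mono (x y : Vtx n) : ℝ := ∏ i, x i ^ y i

/-- `k` is a vector of rate constants on `G`: positive on edges, zero off. -/
def IsMAS (G : Net n) (k : Vtx n × Vtx n → ℝ) : Prop :=
  (∀ e ∈ G, 0 < k e) ∧ ∀ e, e ∉ G → k e = 0

/-- The mass-action vector field of `G_k`. -/
def maf (G : Net n) (k : Vtx n × Vtx n → ℝ) (x : Vtx n) : Vtx n :=
  ∑ e ∈ G, (k e * mono x e.1) • (e.2 - e.1)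

/-- Dynamical equivalence of mass-action systems. -/
def DynEquiv (G : Net n) (k : Vtx n × Vtx n → ℝ)
    (G' : Net n) (k' : Vtx n × Vtx n → ℝ) : Prop :=
  ∀ x : Vtx n, Pos x → maf G k x = maf G' k' x

/-- `x` is a complex-balanced steady state of `G_k`. -/
def CBsteady (G : Net n) (k : Vtx n × Vtx n → ℝ) (x : Vtx n) : Prop :=
  ∀ v ∈ verts G,
    (∑ e ∈ G.filter (fun e => e.1 = v), k e * mono x v)
      = ∑ e ∈ G.filter (fun e => e.2 = v), k e * mono x e.1

/-- The stoichiometric subspace of a network. -/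
def stoichSubspace (G : Net n) : Submodule ℝ (Vtx n) :=
  Submodule.span ℝ {d | ∃ e ∈ G, d = e.2 - e.1}

/-- Undirected connectivity relation of a network. -/
def connRel (G : Net n) : Vtx n → Vtx n → Prop :=
  Relation.ReflTransGen (fun a b => (a, b) ∈ G ∨ (b, a) ∈ G)

/-- The number of connected components of a network. -/
def numComponents (G : Net n) : ℕ :=
  ((verts G).image (fun v => (verts G).filter (fun w => connRel G v w))).card

/-- The deficiency of a network. -/
def deficiency (G : Net n) : ℤ :=
  (verts G).card - numComponents G - Module.finrank ℝ (stoichSubspace G)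

section Mono
variable {n : ℕ}

lemma mono_pos {x : Vtx n} (hx : Pos x) (y : Vtx n) : 0 < mono x y :=
  Finset.prod_pos fun i _ => Real.rpow_pos_of_pos (hx i) _

/-- The positive orthant as a monoid under pointwise multiplication. -/
def PosOrth (n : ℕ) : Type := {x : Vtx n // Pos x}

instance : Monoid (PosOrth n) where
  mul a b := ⟨fun i => a.1 i * b.1 i, fun i => mul_pos (a.2 i) (b.2 i)⟩
  one := ⟨fun _ => 1, fun _ => one_pos⟩
  mul_assoc a b c := Subtype.ext (funext fun i => mul_assoc _ _ _)
  one_mul a := Subtype.ext (funext fun i => one_mul _)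
  mul_one a := Subtype.ext (funext fun i => mul_one _)

/-- `mono · y` as a monoid hom on the positive orthant. -/
def monoHom (y : Vtx n) : PosOrth n →* ℝ where
  toFun x := mono x.1 y
  map_one' := by
    show ∏ i, (1:ℝ) ^ (y i) = 1
    simp [Real.one_rpow]
  map_mul' a b := by
    show ∏ i, (a.1 i * b.1 i) ^ (y i) = (∏ i, a.1 i ^ (y i)) * ∏ i, b.1 i ^ (y i)
    rw [← Finset.prod_mul_distrib]
    exact Finset.prod_congr rfl fun i _ =>
      Real.mul_rpow (le_of_lt (a.2 i)) (le_of_lt (b.2 i))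

lemma monoHom_injective : Function.Injective (monoHom (n := n)) := by
  intro y z h
  funext i
  have hx : Pos (fun j : Fin n => if j = i then Real.exp 1 else 1) := by
    intro j; by_cases hj : j = i <;> simp [hj, Real.exp_pos]
  have := congrArg (fun f : PosOrth n →* ℝ => f ⟨_, hx⟩) h
  simp only [monoHom, MonoidHom.coe_mk, OneHom.coe_mk, mono] at this
  rw [Finset.prod_eq_single i (fun j _ hj => by simp [hj, Real.one_rpow]) (by simp),
      Finset.prod_eq_single i (fun j _ hj => by simp [hj, Real.one_rpow]) (by simp)] at this
  simp only [if_pos rfl, if_true] at this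
  have h2 := congrArg Real.log this
  rwa [Real.log_rpow (Real.exp_pos 1), Real.log_rpow (Real.exp_pos 1),
    Real.log_exp, mul_one, mul_one] at h2

/-- Linear independence of monomials with distinct (real) exponent vectors:
scalar version over a finite set. -/
lemma mono_indep (V : Finset (Vtx n)) (c : Vtx n → ℝ)
    (h : ∀ x : Vtx n, Pos x → ∑ v ∈ V, c v * mono x v = 0) :
    ∀ v ∈ V, c v = 0 := by
  have hli : LinearIndependent ℝ (fun y : Vtx n => ((monoHom y : PosOrth n →* ℝ) : PosOrth n → ℝ)) :=
    (linearIndependent_monoidHom (PosOrth n) ℝ).comp _ monoHom_injective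
  have := linearIndependent_iff'.1 hli V c ?_
  · exact this
  · funext x
    have hx := h x.1 x.2
    simp only [Finset.sum_apply, Pi.smul_apply, smul_eq_mul]
    simpa [monoHom, MonoidHom.coe_mk, OneHom.coe_mk] using hx

/-- Vector version. -/
lemma mono_indep_vec (V : Finset (Vtx n)) (c : Vtx n → Vtx n)
    (h : ∀ x : Vtx n, Pos x → ∑ v ∈ V, mono x v • c v = 0) :
    ∀ v ∈ V, c v = 0 := by
  intro v hv
  funext i
  refine mono_indep V (fun v => c v i) (fun x hx => ?_) v hv
  have := congrFun (h x hx) i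
  simpa [mul_comm, Finset.sum_apply] using this

end Mono
section Sums
variable {n : ℕ}

lemma mem_verts_fst {G : Net n} {e : Vtx n × Vtx n} (he : e ∈ G) : e.1 ∈ verts G :=
  Finset.mem_union_left _ (Finset.mem_image_of_mem _ he)

lemma mem_verts_snd {G : Net n} {e : Vtx n × Vtx n} (he : e ∈ G) : e.2 ∈ verts G :=
  Finset.mem_union_right _ (Finset.mem_image_of_mem _ he)

/-- Rewrite a sum over out-edges at `z` as a sum over a superset `W` of targets. -/
lemma sum_out_eq {M : Type*} [AddCommMonoid M] (G : Net n) (W : Finset (Vtx n)) (z : Vtx n)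
    (f : Vtx n × Vtx n → M)
    (h0 : ∀ w, (z, w) ∉ G → f (z, w) = 0) (hW : ∀ w, (z, w) ∈ G → w ∈ W) :
    ∑ e ∈ G.filter (fun e => e.1 = z), f e = ∑ w ∈ W, f (z, w) := by
  rw [← Finset.sum_filter_of_ne (p := fun w => (z, w) ∈ G)
    (fun w _ hfw => by by_contra hc; exact hfw (h0 w hc))]
  refine Finset.sum_nbij' (i := fun e => e.2) (j := fun w => (z, w)) ?_ ?_ ?_ ?_ ?_
  · intro e he
    rw [Finset.mem_filter] at he ⊢
    refine ⟨hW _ ?_, ?_⟩ <;> · rw [← he.2]; exact he.1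
  · intro w hw
    rw [Finset.mem_filter] at hw
    exact Finset.mem_filter.2 ⟨hw.2, rfl⟩
  · intro e he
    rw [Finset.mem_filter] at he
    rw [← he.2]
  · intro w _; rfl
  · intro e he
    rw [Finset.mem_filter] at he
    rw [← he.2]

/-- Rewrite a sum over in-edges at `z` as a sum over a superset `W` of sources. -/
lemma sum_in_eq {M : Type*} [AddCommMonoid M] (G : Net n) (W : Finset (Vtx n)) (z : Vtx n)
    (f : Vtx n × Vtx n → M)
    (h0 : ∀ u, (u, z) ∉ G → f (u, z) = 0) (hW : ∀ u, (u, z) ∈ G → u ∈ W) :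
    ∑ e ∈ G.filter (fun e => e.2 = z), f e = ∑ u ∈ W, f (u, z) := by
  rw [← Finset.sum_filter_of_ne (p := fun u => (u, z) ∈ G)
    (fun u _ hfu => by by_contra hc; exact hfu (h0 u hc))]
  refine Finset.sum_nbij' (i := fun e => e.1) (j := fun u => (u, z)) ?_ ?_ ?_ ?_ ?_
  · intro e he
    rw [Finset.mem_filter] at he ⊢
    refine ⟨hW _ ?_, ?_⟩ <;> · rw [← he.2]; exact he.1
  · intro w hw
    rw [Finset.mem_filter] at hw
    exact Finset.mem_filter.2 ⟨hw.2, rfl⟩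
  · intro e he
    rw [Finset.mem_filter] at he
    rw [← he.2]
  · intro w _; rfl
  · intro e he
    rw [Finset.mem_filter] at he
    rw [← he.2]

lemma outSum_eq (G : Net n) (J : Vtx n × Vtx n → ℝ) (hJ : ∀ e ∉ G, J e = 0)
    (W : Finset (Vtx n)) (hW : verts G ⊆ W) (z : Vtx n) :
    outSum G J z = ∑ w ∈ W, J (z, w) :=
  sum_out_eq G W z J (fun w hw => hJ _ hw) (fun w hw => hW (mem_verts_snd hw))

lemma inSum_eq (G : Net n) (J : Vtx n × Vtx n → ℝ) (hJ : ∀ e ∉ G, J e = 0)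
    (W : Finset (Vtx n)) (hW : verts G ⊆ W) (z : Vtx n) :
    inSum G J z = ∑ u ∈ W, J (u, z) :=
  sum_in_eq G W z J (fun u hu => hJ _ hu) (fun u hu => hW (mem_verts_fst hu))

lemma netOut_eq (G : Net n) (J : Vtx n × Vtx n → ℝ) (hJ : ∀ e ∉ G, J e = 0)
    (W : Finset (Vtx n)) (hW : verts G ⊆ W) (z : Vtx n) :
    netOut G J z = ∑ w ∈ W, J (z, w) • (w - z) :=
  sum_out_eq G W z (fun e => J e • (e.2 - e.1))
    (fun w hw => by show J (z, w) • _ = 0; rw [hJ _ hw, zero_smul])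
    (fun w hw => hW (mem_verts_snd hw))

lemma netOut_of_not_source {G : Net n} (J : Vtx n × Vtx n → ℝ) {v : Vtx n}
    (hv : v ∉ sources G) : netOut G J v = 0 := by
  unfold netOut
  rw [Finset.filter_false_of_mem, Finset.sum_empty]
  intro e he hc
  exact hv (by unfold sources; exact hc ▸ Finset.mem_image_of_mem Prod.fst he)

/-- Decomposition of the mass-action field by source vertices. -/
lemma maf_eq (G : Net n) (k : Vtx n × Vtx n → ℝ) (x : Vtx n) :
    maf G k x = ∑ v ∈ sources G, mono x v • netOut G k v := by
  unfold maf netOut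
  rw [← Finset.sum_fiberwise_of_maps_to (g := Prod.fst) (t := sources G)
    (fun e he => Finset.mem_image_of_mem _ he)]
  refine Finset.sum_congr rfl fun v _ => ?_
  rw [Finset.smul_sum]
  refine Finset.sum_congr rfl fun e he => ?_
  rw [Finset.mem_filter] at he
  rw [← he.2, smul_smul, mul_comm]

end Sums
section Key
variable {n : ℕ}

lemma verts_mono {G H : Net n} (h : G ⊆ H) : verts G ⊆ verts H :=
  Finset.union_subset_union (Finset.image_subset_image h) (Finset.image_subset_image h)

lemma flux_nonneg {G : Net n} {J : Vtx n × Vtx n → ℝ} (hF : IsFlux G J) (e : Vtx n × Vtx n) :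
    0 ≤ J e := by
  by_cases he : e ∈ G
  · exact le_of_lt (hF.1 e he)
  · rw [hF.2 e he]

/-- One step of vertex elimination preserving complex balance and net outputs. -/
lemma reroute (G : Net n) (J : Vtx n × Vtx n → ℝ) (hF : IsFlux G J)
    (hCB : ComplexBalanced G J) (v : Vtx n) (hv : v ∈ verts G) (hnet : netOut G J v = 0) :
    ∃ (G'' : Net n) (J'' : Vtx n × Vtx n → ℝ), IsFlux G'' J'' ∧ ComplexBalanced G'' J'' ∧
      verts G'' ⊆ (verts G).erase v ∧ ∀ z, netOut G'' J'' z = netOut G J z := by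
  classical
  set W : Finset (Vtx n) := verts G with hW
  set T : ℝ := ∑ w ∈ W.erase v, J (v, w) with hT
  have hJ0 := flux_nonneg hF
  have hJoff := hF.2
  have hT0 : 0 ≤ T := Finset.sum_nonneg fun w _ => hJ0 _
  -- in-flux (excluding loop) equals T, by complex balance at v
  have hTin : ∑ u ∈ W.erase v, J (u, v) = T := by
    have hbal := hCB v hv
    rw [inSum_eq G J hJoff W (le_refl _) v, outSum_eq G J hJoff W (le_refl _) v] at hbal
    rw [← Finset.add_sum_erase W (fun u => J (u, v)) hv,
        ← Finset.add_sum_erase W (fun w => J (v, w)) hv] at hbal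
    exact add_left_cancel hbal
  -- net out at v, over the erased set
  have hnetv : ∑ w ∈ W.erase v, J (v, w) • (w - v) = 0 := by
    have h1 : netOut G J v = ∑ w ∈ W, J (v, w) • (w - v) :=
      netOut_eq G J hJoff W (le_refl _) v
    rw [hnet, ← Finset.add_sum_erase W (fun w => J (v, w) • (w - v)) hv] at h1
    rw [sub_self, smul_zero, zero_add] at h1
    exact h1.symm
  by_cases hTz : T = 0
  · -- no outgoing flux except possibly the self-loop; v is isolated modulo the loop
    have hout : ∀ w, w ≠ v → (v, w) ∉ G := by
      intro w hwv hmem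
      have hwW : w ∈ W.erase v := Finset.mem_erase.2 ⟨hwv, mem_verts_snd hmem⟩
      have hz : J (v, w) = 0 :=
        (Finset.sum_eq_zero_iff_of_nonneg (fun u _ => hJ0 (v, u))).1 hTz w hwW
      exact absurd hz (ne_of_gt (hF.1 _ hmem))
    have hin : ∀ u, u ≠ v → (u, v) ∉ G := by
      intro u huv hmem
      have huW : u ∈ W.erase v := Finset.mem_erase.2 ⟨huv, mem_verts_fst hmem⟩
      have hz : J (u, v) = 0 :=
        (Finset.sum_eq_zero_iff_of_nonneg (fun u _ => hJ0 (u, v))).1 (hTin.trans hTz) u huW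
      exact absurd hz (ne_of_gt (hF.1 _ hmem))
    set G2 : Net n := G.erase (v, v) with hG2
    set J2 : Vtx n × Vtx n → ℝ := fun e => if e = (v, v) then 0 else J e with hJ2
    have hF2 : IsFlux G2 J2 := by
      constructor
      · intro e he
        rw [hG2, Finset.mem_erase] at he
        show 0 < if e = (v, v) then (0:ℝ) else J e
        rw [if_neg he.1]
        exact hF.1 e he.2
      · intro e he
        show (if e = (v, v) then (0:ℝ) else J e) = 0
        by_cases hevv : e = (v, v)
        · rw [if_pos hevv]
        · rw [if_neg hevv]
          refine hJoff e fun hmem => he (Finset.mem_erase.2 ⟨hevv, hmem⟩)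
    have hsub : verts G2 ⊆ (verts G).erase v := by
      intro y hy
      have hyG : y ∈ verts G := verts_mono (Finset.erase_subset _ _) hy
      refine Finset.mem_erase.2 ⟨?_, hyG⟩
      intro hyv
      subst hyv
      rcases Finset.mem_union.1 hy with h | h
      · obtain ⟨e, he, he1⟩ := Finset.mem_image.1 h
        rw [hG2, Finset.mem_erase] at he
        have he2 : e.2 = y := by
          by_contra hc
          exact hout e.2 hc (by rw [← he1]; exact he.2)
        exact he.1 (Prod.ext he1 he2)
      · obtain ⟨e, he, he2⟩ := Finset.mem_image.1 h
        rw [hG2, Finset.mem_erase] at he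
        have he1 : e.1 = y := by
          by_contra hc
          exact hin e.1 hc (by rw [← he2]; exact he.2)
        exact he.1 (Prod.ext he1 he2)
    have hJ2row : ∀ z, z ≠ v → ∀ w, J2 (z, w) = J (z, w) := by
      intro z hz w
      rw [hJ2]
      exact if_neg (fun hc => hz (congrArg Prod.fst hc))
    have hJ2col : ∀ z, z ≠ v → ∀ u, J2 (u, z) = J (u, z) := by
      intro z hz u
      rw [hJ2]
      exact if_neg (fun hc => hz (congrArg Prod.snd hc))
    have hvsub : verts G2 ⊆ W := hsub.trans (Finset.erase_subset _ _)
    refine ⟨G2, J2, hF2, ?_, hsub, ?_⟩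
    · intro z hz
      have hzv : z ≠ v := (Finset.mem_erase.1 (hsub hz)).1
      have hzG : z ∈ verts G := (Finset.mem_erase.1 (hsub hz)).2
      rw [inSum_eq G2 J2 hF2.2 W hvsub z, outSum_eq G2 J2 hF2.2 W hvsub z]
      have h1 := hCB z hzG
      rw [inSum_eq G J hJoff W (le_refl _) z, outSum_eq G J hJoff W (le_refl _) z] at h1
      calc ∑ u ∈ W, J2 (u, z) = ∑ u ∈ W, J (u, z) :=
            Finset.sum_congr rfl fun u _ => hJ2col z hzv u
        _ = ∑ w ∈ W, J (z, w) := h1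
        _ = ∑ w ∈ W, J2 (z, w) := (Finset.sum_congr rfl fun w _ => hJ2row z hzv w).symm
    · intro z
      rw [netOut_eq G2 J2 hF2.2 W hvsub z, netOut_eq G J hJoff W (le_refl _) z]
      by_cases hzv : z = v
      · refine Finset.sum_congr rfl fun w _ => ?_
        by_cases hwv : w = v
        · rw [hzv, hwv, sub_self, smul_zero, smul_zero]
        · have h0 : J (z, w) = 0 := by rw [hzv]; exact hJoff _ (hout w hwv)
          have h2 : J2 (z, w) = 0 := by
            show (if (z, w) = (v, v) then (0:ℝ) else J (z, w)) = 0
            split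
            · rfl
            · exact h0
          rw [h2, h0]
      · exact Finset.sum_congr rfl fun w _ => by rw [hJ2row z hzv w]
  · -- main rerouting case: T > 0
    have hTpos : 0 < T := lt_of_le_of_ne hT0 (Ne.symm hTz)
    set inN : Finset (Vtx n) := (G.filter (fun e => e.2 = v ∧ e.1 ≠ v)).image Prod.fst with hinN
    set outN : Finset (Vtx n) := (G.filter (fun e => e.1 = v ∧ e.2 ≠ v)).image Prod.snd with houtN
    set G2 : Net n := G.filter (fun e => e.1 ≠ v ∧ e.2 ≠ v) ∪ inN ×ˢ outN with hG2
    set J2 : Vtx n × Vtx n → ℝ :=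
      fun e => if e.1 = v ∨ e.2 = v then 0 else J e + J (e.1, v) * J (v, e.2) / T with hJ2
    have hJ2val : ∀ e : Vtx n × Vtx n, e.1 ≠ v → e.2 ≠ v →
        J2 e = J e + J (e.1, v) * J (v, e.2) / T := by
      intro e h1 h2
      rw [hJ2]
      exact if_neg (fun hc => hc.elim h1 h2)
    have hJ2row0 : ∀ w, J2 (v, w) = 0 := fun w => if_pos (Or.inl rfl)
    have hJ2col0 : ∀ u, J2 (u, v) = 0 := fun u => if_pos (Or.inr rfl)
    have hinNmem : ∀ u ∈ inN, (u, v) ∈ G := by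
      intro u hu
      obtain ⟨a, ha, ha1⟩ := Finset.mem_image.1 hu
      rw [Finset.mem_filter] at ha
      have : a = (u, v) := Prod.ext ha1 ha.2.1
      exact this ▸ ha.1
    have houtNmem : ∀ w ∈ outN, (v, w) ∈ G := by
      intro w hw
      obtain ⟨a, ha, ha2⟩ := Finset.mem_image.1 hw
      rw [Finset.mem_filter] at ha
      have : a = (v, w) := Prod.ext ha.2.1 ha2
      exact this ▸ ha.1
    have hinNne : ∀ u ∈ inN, u ≠ v := by
      intro u hu
      obtain ⟨a, ha, ha1⟩ := Finset.mem_image.1 hu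
      rw [Finset.mem_filter] at ha
      exact ha1 ▸ ha.2.2
    have houtNne : ∀ w ∈ outN, w ≠ v := by
      intro w hw
      obtain ⟨a, ha, ha2⟩ := Finset.mem_image.1 hw
      rw [Finset.mem_filter] at ha
      exact ha2 ▸ ha.2.2
    have hJv0 : ∀ u, u ≠ v → u ∉ inN → J (u, v) = 0 := by
      intro u hu hnot
      refine hJoff _ fun hmem => hnot ?_
      exact Finset.mem_image.2 ⟨(u, v), Finset.mem_filter.2 ⟨hmem, rfl, hu⟩, rfl⟩
    have hJw0 : ∀ w, w ≠ v → w ∉ outN → J (v, w) = 0 := by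
      intro w hw hnot
      refine hJoff _ fun hmem => hnot ?_
      exact Finset.mem_image.2 ⟨(v, w), Finset.mem_filter.2 ⟨hmem, rfl, hw⟩, rfl⟩
    have hnotv : ∀ e ∈ G2, e.1 ≠ v ∧ e.2 ≠ v := by
      intro e he
      rcases Finset.mem_union.1 he with h | h
      · exact (Finset.mem_filter.1 h).2
      · rw [Finset.mem_product] at h
        exact ⟨hinNne _ h.1, houtNne _ h.2⟩
    have hF2 : IsFlux G2 J2 := by
      constructor
      · intro e he
        obtain ⟨h1, h2⟩ := hnotv e he
        rw [hJ2val e h1 h2]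
        rcases Finset.mem_union.1 he with h | h
        · exact add_pos_of_pos_of_nonneg (hF.1 e (Finset.mem_filter.1 h).1)
            (div_nonneg (mul_nonneg (hJ0 _) (hJ0 _)) hT0)
        · rw [Finset.mem_product] at h
          exact add_pos_of_nonneg_of_pos (hJ0 e)
            (div_pos (mul_pos (hF.1 _ (hinNmem _ h.1)) (hF.1 _ (houtNmem _ h.2))) hTpos)
      · intro e he
        by_cases hev : e.1 = v ∨ e.2 = v
        · rw [hJ2]; exact if_pos hev
        · push_neg at hev
          rw [hJ2val e hev.1 hev.2]
          have heG : e ∉ G := fun hmem =>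
            he (Finset.mem_union_left _ (Finset.mem_filter.2 ⟨hmem, hev⟩))
          have hprod : e.1 ∉ inN ∨ e.2 ∉ outN := by
            by_contra hc
            push_neg at hc
            exact he (Finset.mem_union_right _ (Finset.mem_product.2 ⟨hc.1, hc.2⟩))
          rw [hJoff e heG]
          rcases hprod with h | h
          · rw [hJv0 _ hev.1 h, zero_mul, zero_div, add_zero]
          · rw [hJw0 _ hev.2 h, mul_zero, zero_div, add_zero]
    have hsub : verts G2 ⊆ (verts G).erase v := by
      intro y hy
      have hmemG : ∀ e ∈ G2, e.1 ∈ verts G ∧ e.2 ∈ verts G := by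
        intro e he
        rcases Finset.mem_union.1 he with h | h
        · exact ⟨mem_verts_fst (Finset.mem_filter.1 h).1, mem_verts_snd (Finset.mem_filter.1 h).1⟩
        · rw [Finset.mem_product] at h
          exact ⟨mem_verts_fst (e := (e.1, v)) (hinNmem _ h.1),
            mem_verts_snd (e := (v, e.2)) (houtNmem _ h.2)⟩
      rcases Finset.mem_union.1 hy with h | h
      · obtain ⟨e, he, rfl⟩ := Finset.mem_image.1 h
        exact Finset.mem_erase.2 ⟨(hnotv e he).1, (hmemG e he).1⟩
      · obtain ⟨e, he, rfl⟩ := Finset.mem_image.1 h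
        exact Finset.mem_erase.2 ⟨(hnotv e he).2, (hmemG e he).2⟩
    have hvsub : verts G2 ⊆ W := hsub.trans (Finset.erase_subset _ _)
    -- row sums agree off v
    have hrow : ∀ z, z ≠ v → ∑ w ∈ W, J2 (z, w) = ∑ w ∈ W, J (z, w) := by
      intro z hz
      rw [← Finset.add_sum_erase W (fun w => J2 (z, w)) hv,
          ← Finset.add_sum_erase W (fun w => J (z, w)) hv]
      rw [hJ2col0 z, zero_add]
      have hterm : ∀ w ∈ W.erase v, J2 (z, w) = J (z, w) + J (z, v) / T * J (v, w) := by
        intro w hw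
        rw [hJ2val (z, w) hz (Finset.mem_erase.1 hw).1]
        ring_nf
      rw [Finset.sum_congr rfl hterm, Finset.sum_add_distrib, ← Finset.mul_sum, ← hT,
        div_mul_cancel₀ _ hTz]
      ring
    have hcol : ∀ z, z ≠ v → ∑ u ∈ W, J2 (u, z) = ∑ u ∈ W, J (u, z) := by
      intro z hz
      rw [← Finset.add_sum_erase W (fun u => J2 (u, z)) hv,
          ← Finset.add_sum_erase W (fun u => J (u, z)) hv]
      rw [hJ2row0 z, zero_add]
      have hterm : ∀ u ∈ W.erase v, J2 (u, z) = J (u, z) + J (v, z) / T * J (u, v) := by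
        intro u hu
        rw [hJ2val (u, z) (Finset.mem_erase.1 hu).1 hz]
        ring_nf
      rw [Finset.sum_congr rfl hterm, Finset.sum_add_distrib, ← Finset.mul_sum, hTin,
        div_mul_cancel₀ _ hTz]
      ring
    -- net outputs agree off v
    have hnet2 : ∀ z, z ≠ v → ∑ w ∈ W, J2 (z, w) • (w - z) = ∑ w ∈ W, J (z, w) • (w - z) := by
      intro z hz
      rw [← Finset.add_sum_erase W (fun w => J2 (z, w) • (w - z)) hv,
          ← Finset.add_sum_erase W (fun w => J (z, w) • (w - z)) hv]
      rw [hJ2col0 z, zero_smul, zero_add]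
      have hterm : ∀ w ∈ W.erase v, J2 (z, w) • (w - z)
          = J (z, w) • (w - z) + (J (z, v) / T) • (J (v, w) • (w - z)) := by
        intro w hw
        rw [hJ2val (z, w) hz (Finset.mem_erase.1 hw).1, smul_smul, add_smul]
        congr 2
        ring
      rw [Finset.sum_congr rfl hterm, Finset.sum_add_distrib, ← Finset.smul_sum]
      have hsplit : ∑ w ∈ W.erase v, J (v, w) • (w - z) = T • (v - z) := by
        have : ∀ w ∈ W.erase v, J (v, w) • (w - z)
            = J (v, w) • (w - v) + J (v, w) • (v - z) := by
          intro w _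
          rw [← smul_add, sub_add_sub_cancel]
        rw [Finset.sum_congr rfl this, Finset.sum_add_distrib, hnetv, zero_add,
          ← Finset.sum_smul, ← hT]
      rw [hsplit, smul_smul, div_mul_cancel₀ _ hTz]
      abel
    refine ⟨G2, J2, hF2, ?_, hsub, ?_⟩
    · intro z hz
      have hzv : z ≠ v := (Finset.mem_erase.1 (hsub hz)).1
      have hzG : z ∈ verts G := (Finset.mem_erase.1 (hsub hz)).2
      rw [inSum_eq G2 J2 hF2.2 W hvsub z, outSum_eq G2 J2 hF2.2 W hvsub z,
        hcol z hzv, hrow z hzv]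
      have h1 := hCB z hzG
      rwa [inSum_eq G J hJoff W (le_refl _) z, outSum_eq G J hJoff W (le_refl _) z] at h1
    · intro z
      rw [netOut_eq G2 J2 hF2.2 W hvsub z, netOut_eq G J hJoff W (le_refl _) z]
      by_cases hzv : z = v
      · have hL : ∑ w ∈ W, J2 (z, w) • (w - z) = 0 := by
          refine Finset.sum_eq_zero fun w _ => ?_
          rw [hzv, hJ2row0 w, zero_smul]
        have hR : ∑ w ∈ W, J (z, w) • (w - z) = 0 := by
          rw [hzv, ← netOut_eq G J hJoff W (le_refl _) v]
          exact hnet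
        rw [hL, hR]
      · exact hnet2 z hzv

end Key
/-- Iterated elimination: a complex-balanced flux with zero net output off `S`
can be realized on a network with vertices inside `S`. -/
lemma keyElim {n : ℕ} (S : Finset (Vtx n)) :
    ∀ (m : ℕ) (G : Net n) (J : Vtx n × Vtx n → ℝ), (verts G \ S).card ≤ m →
    IsFlux G J → ComplexBalanced G J → (∀ v, v ∉ S → netOut G J v = 0) →
    ∃ (G2 : Net n) (J2 : Vtx n × Vtx n → ℝ), IsFlux G2 J2 ∧ ComplexBalanced G2 J2 ∧
      verts G2 ⊆ S ∧ ∀ z, netOut G2 J2 z = netOut G J z := by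
  intro m
  induction m with
  | zero =>
    intro G J hc hF hCB hz
    have hsub : verts G ⊆ S := by
      rw [← Finset.sdiff_eq_empty_iff_subset]
      exact Finset.card_eq_zero.1 (Nat.le_zero.1 hc)
    exact ⟨G, J, hF, hCB, hsub, fun z => rfl⟩
  | succ m ih =>
    intro G J hc hF hCB hz
    by_cases hsub : verts G ⊆ S
    · exact ⟨G, J, hF, hCB, hsub, fun z => rfl⟩
    · obtain ⟨v, hvG, hvS⟩ := Finset.not_subset.1 hsub
      obtain ⟨G2, J2, hF2, hCB2, hsub2, heq⟩ := reroute G J hF hCB v hvG (hz v hvS)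
      have h1 : verts G2 \ S ⊆ (verts G \ S).erase v := by
        intro y hy
        rw [Finset.mem_sdiff] at hy
        have := Finset.mem_erase.1 (hsub2 hy.1)
        exact Finset.mem_erase.2 ⟨this.1, Finset.mem_sdiff.2 ⟨this.2, hy.2⟩⟩
      have hcard : (verts G2 \ S).card ≤ m := by
        have h2 := Finset.card_le_card h1
        rw [Finset.card_erase_of_mem (Finset.mem_sdiff.2 ⟨hvG, hvS⟩)] at h2
        omega
      obtain ⟨G3, J3, hF3, hCB3, hsub3, heq3⟩ := ih G2 J2 hcard hF2 hCB2
        (fun w hw => by rw [heq w]; exact hz w hw)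
      exact ⟨G3, J3, hF3, hCB3, hsub3, fun z => (heq3 z).trans (heq z)⟩

lemma sources_subset_verts {n : ℕ} (G : Net n) : sources G ⊆ verts G :=
  Finset.subset_union_left

theorem stmt13 (G : Net n) (k : Vtx n × Vtx n → ℝ) (hk : IsMAS G k) :
    (∃ (G' : Net n) (k' : Vtx n × Vtx n → ℝ),
      IsMAS G' k' ∧ DynEquiv G k G' k' ∧ ∃ x0, Pos x0 ∧ CBsteady G' k' x0) ↔
    (∃ (G' : Net n) (k' : Vtx n × Vtx n → ℝ),
      IsMAS G' k' ∧ DynEquiv G k G' k' ∧ (∃ x0, Pos x0 ∧ CBsteady G' k' x0) ∧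
        verts G' ⊆ sources G) := by
  constructor
  · rintro ⟨G', k', hMAS', hDE, x0, hx0, hCBS⟩
    -- Step 1: net outputs of the two systems agree everywhere.
    have hnetall : ∀ z, netOut G k z = netOut G' k' z := by
      set V : Finset (Vtx n) := sources G ∪ sources G' with hV
      have hcoef : ∀ v ∈ V, netOut G k v - netOut G' k' v = 0 := by
        refine mono_indep_vec V (fun v => netOut G k v - netOut G' k' v) ?_
        intro x hx
        have e1 : ∑ v ∈ V, mono x v • netOut G k v = maf G k x := by
          rw [maf_eq]
          exact (Finset.sum_subset Finset.subset_union_left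
            (fun v _ hvn => by rw [netOut_of_not_source k hvn, smul_zero])).symm
        have e2 : ∑ v ∈ V, mono x v • netOut G' k' v = maf G' k' x := by
          rw [maf_eq]
          exact (Finset.sum_subset Finset.subset_union_right
            (fun v _ hvn => by rw [netOut_of_not_source k' hvn, smul_zero])).symm
        calc ∑ v ∈ V, mono x v • (netOut G k v - netOut G' k' v)
            = ∑ v ∈ V, (mono x v • netOut G k v - mono x v • netOut G' k' v) :=
              Finset.sum_congr rfl fun v _ => smul_sub _ _ _
          _ = maf G k x - maf G' k' x := by rw [Finset.sum_sub_distrib, e1, e2]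
          _ = 0 := by rw [hDE x hx, sub_self]
      intro z
      by_cases hz : z ∈ V
      · have := hcoef z hz
        rwa [sub_eq_zero] at this
      · rw [hV, Finset.mem_union] at hz
        push_neg at hz
        rw [netOut_of_not_source k hz.1, netOut_of_not_source k' hz.2]
    -- Step 2: pass to the flux system at the steady state x0.
    set J : Vtx n × Vtx n → ℝ := fun e => k' e * mono x0 e.1 with hJ
    have hFJ : IsFlux G' J := by
      constructor
      · intro e he
        exact mul_pos (hMAS'.1 e he) (mono_pos hx0 _)
      · intro e he
        show k' e * mono x0 e.1 = 0
        rw [hMAS'.2 e he, zero_mul]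
    have hnetJ : ∀ G2 (k2 : Vtx n × Vtx n → ℝ) v,
        netOut G2 (fun e => k2 e * mono x0 e.1) v = mono x0 v • netOut G2 k2 v := by
      intro G2 k2 v
      unfold netOut
      rw [Finset.smul_sum]
      refine Finset.sum_congr rfl fun e he => ?_
      rw [Finset.mem_filter] at he
      rw [smul_smul, ← he.2, mul_comm]
    have hCBJ : ComplexBalanced G' J := by
      intro v hv
      have h := hCBS v hv
      have hout : outSum G' J v = ∑ e ∈ G'.filter (fun e => e.1 = v), k' e * mono x0 v := by
        refine Finset.sum_congr rfl fun e he => ?_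
        rw [Finset.mem_filter] at he
        show k' e * mono x0 e.1 = _
        rw [he.2]
      rw [hout, h]
      rfl
    have hzeroJ : ∀ v, v ∉ sources G → netOut G' J v = 0 := by
      intro v hv
      rw [hJ, hnetJ G' k' v, ← hnetall v, netOut_of_not_source k hv, smul_zero]
    -- Step 3: eliminate non-source vertices.
    obtain ⟨G2, J2, hF2, hCB2, hsub2, heq2⟩ := keyElim (sources G)
      (verts G' \ sources G).card G' J (le_refl _) hFJ hCBJ hzeroJ
    -- Step 4: convert the flux back to a mass-action system.
    set k2 : Vtx n × Vtx n → ℝ := fun e => J2 e / mono x0 e.1 with hk2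
    have hJ2k2 : ∀ e, J2 e = k2 e * mono x0 e.1 := by
      intro e
      rw [hk2]
      show J2 e = J2 e / mono x0 e.1 * mono x0 e.1
      rw [div_mul_cancel₀ _ (ne_of_gt (mono_pos hx0 _))]
    have hMAS2 : IsMAS G2 k2 := by
      constructor
      · intro e he
        exact div_pos (hF2.1 e he) (mono_pos hx0 _)
      · intro e he
        show J2 e / mono x0 e.1 = 0
        rw [hF2.2 e he, zero_div]
    have hJ2fun : J2 = fun e => k2 e * mono x0 e.1 := funext hJ2k2
    have hnetk2 : ∀ v, netOut G2 k2 v = netOut G' k' v := by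
      intro v
      have h1 : mono x0 v • netOut G2 k2 v = mono x0 v • netOut G' k' v := by
        rw [← hnetJ G2 k2 v, ← hnetJ G' k' v, ← hJ2fun]
        exact heq2 v
      exact smul_right_injective _ (ne_of_gt (mono_pos hx0 v)) h1
    have hCBS2 : CBsteady G2 k2 x0 := by
      intro v hv
      have h := hCB2 v hv
      have hout : outSum G2 J2 v = ∑ e ∈ G2.filter (fun e => e.1 = v), k2 e * mono x0 v := by
        refine Finset.sum_congr rfl fun e he => ?_
        rw [Finset.mem_filter] at he
        rw [hJ2k2 e, he.2]
      have hin : inSum G2 J2 v = ∑ e ∈ G2.filter (fun e => e.2 = v), k2 e * mono x0 e.1 := by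
        refine Finset.sum_congr rfl fun e he => ?_
        exact hJ2k2 e
      rw [hout, hin] at h
      exact h.symm
    -- Step 5: dynamical equivalence.
    have hsrc2 : sources G2 ⊆ sources G := (sources_subset_verts G2).trans hsub2
    have hDE2 : DynEquiv G k G2 k2 := by
      intro x hx
      rw [maf_eq, maf_eq]
      have hzero : ∀ v ∈ sources G, v ∉ sources G2 → mono x v • netOut G k v = 0 := by
        intro v _ hv2
        rw [hnetall v, ← hnetk2 v, netOut_of_not_source k2 hv2, smul_zero]
      rw [← Finset.sum_subset hsrc2 hzero]
      refine Finset.sum_congr rfl fun v _ => ?_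
      rw [hnetall v, ← hnetk2 v]
    exact ⟨G2, k2, hMAS2, hDE2, ⟨x0, hx0, hCBS2⟩, hsub2⟩
  · rintro ⟨G', k', h1, h2, h3, _⟩
    exact ⟨G', k', h1, h2, h3⟩
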